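/- Let M be a symmetric D×D real matrix whose K-th largest eigenvalue λ_K is strictly positive, and let W̃ be any D×K real matrix. Then ‖M − W̃W̃ᵀ‖_F² ≥ ∑_{k=K+1}^{D} λ_k(M)², with equality attained when W̃ = W_K Λ_K^{1/2}, where the columns of W_K are orthonormal eigenvectors for the top-K eigenvalues and Λ_K = diag(λ_1,…,λ_K). -/

import Mathlib

open Matrix

/-- Squared Frobenius norm of a real matrix. -/
def frobSq {m n : Type*} [Fintype m] [Fintype n] (M : Matrix m n ℝ) : ℝ :=
  ∑ i, ∑ j, (M i j) ^ 2

section D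
variable {D K : ℕ}

lemma frobSq_eq_trace {m n : Type*} [Fintype m] [Fintype n] (M : Matrix m n ℝ) :
    frobSq M = (Mᵀ * M).trace := by
  simp only [frobSq, trace, diag_apply, mul_apply, transpose_apply, pow_two]
  exact Finset.sum_comm

lemma sum_ite_lt_const (hK : K ≤ D) (θ : ℝ) :
    ∑ i : Fin D, (if (i : ℕ) < K then θ else 0) = K * θ := by
  rw [Fin.sum_univ_eq_sum_range (fun n => if n < K then θ else 0)]
  rw [← Finset.sum_subset (Finset.range_subset_range.mpr hK)
    (fun x _ hx => by simp [Finset.mem_range, not_lt] at hx ⊢; omega)]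
  rw [Finset.sum_congr rfl (fun x hx => if_pos (Finset.mem_range.mp hx))]
  simp [mul_comm]

lemma abel_bound (hK : K ≤ D) (c q : Fin D → ℝ) (hc : Antitone c) (hc0 : ∀ i, 0 ≤ c i)
    (hq0 : ∀ i, 0 ≤ q i) (hq1 : ∀ i, q i ≤ 1) (hqs : ∑ i, q i ≤ K) :
    ∑ i, c i * q i ≤ ∑ i : Fin D, (if (i : ℕ) < K then c i else 0) := by
  rcases Nat.eq_zero_or_pos K with h0 | hKpos
  · subst h0
    have hq : ∀ i ∈ Finset.univ, q i = 0 := by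
      intro i _
      have h1 : ∑ i, q i = 0 :=
        le_antisymm (by simpa using hqs) (Finset.sum_nonneg fun i _ => hq0 i)
      exact (Finset.sum_eq_zero_iff_of_nonneg fun i _ => hq0 i).mp h1 i (Finset.mem_univ i)
    have : ∑ i, c i * q i = 0 :=
      Finset.sum_eq_zero fun i hi => by rw [hq i hi, mul_zero]
    simp [this]
  · set θ : ℝ := c ⟨K - 1, by omega⟩ with hθ
    have hθ0 : 0 ≤ θ := hc0 _
    have hge : ∀ i : Fin D, (i : ℕ) < K → θ ≤ c i := fun i hi =>
      hc (by simp [Fin.le_def]; omega)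
    have hle : ∀ i : Fin D, K ≤ (i : ℕ) → c i ≤ θ := fun i hi =>
      hc (by simp [Fin.le_def]; omega)
    have key : ∀ i : Fin D,
        c i * q i + (if (i : ℕ) < K then θ else 0)
          ≤ (if (i : ℕ) < K then c i else 0) + θ * q i := by
      intro i
      by_cases hi : (i : ℕ) < K
      · simp only [if_pos hi]
        nlinarith [hge i hi, hq1 i, hq0 i]
      · simp only [if_neg hi]
        nlinarith [hle i (le_of_not_gt hi), hq0 i]
    have hsum := Finset.sum_le_sum fun i (_ : i ∈ Finset.univ) => key i
    rw [Finset.sum_add_distrib, Finset.sum_add_distrib, sum_ite_lt_const hK θ,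
      ← Finset.mul_sum] at hsum
    have : θ * ∑ i, q i ≤ θ * K := mul_le_mul_of_nonneg_left hqs hθ0
    linarith

lemma core (hK : K ≤ D) (e : Fin D → ℝ) (he : Antitone e) (he0 : ∀ i, 0 ≤ e i)
    (B : Matrix (Fin D) (Fin K) ℝ) :
    2 * (∑ i, e i * (B * Bᵀ) i i) - frobSq (B * Bᵀ)
      ≤ ∑ i : Fin D, (if (i : ℕ) < K then (e i) ^ 2 else 0) := by
  have hG : (Bᵀ * B).IsHermitian := by
    have h := Matrix.isHermitian_conjTranspose_mul_self B
    rwa [Matrix.conjTranspose_eq_transpose_of_trivial] at h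
  have hPSD : (Bᵀ * B).PosSemidef := by
    have h := Matrix.posSemidef_conjTranspose_mul_self B
    rwa [Matrix.conjTranspose_eq_transpose_of_trivial] at h
  set μ : Fin K → ℝ := hG.eigenvalues with hμdef
  have hμ0 : ∀ j, 0 ≤ μ j := fun j => hPSD.eigenvalues_nonneg j
  set U : Matrix (Fin K) (Fin K) ℝ := (hG.eigenvectorUnitary : Matrix (Fin K) (Fin K) ℝ)
    with hUdef
  have hUU : U * Uᵀ = 1 := by
    have h := (Matrix.mem_unitaryGroup_iff).mp hG.eigenvectorUnitary.2
    rwa [Matrix.star_eq_conjTranspose, Matrix.conjTranspose_eq_transpose_of_trivial] at h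
  have hUU' : Uᵀ * U = 1 := by
    have h := (Matrix.mem_unitaryGroup_iff').mp hG.eigenvectorUnitary.2
    rwa [Matrix.star_eq_conjTranspose, Matrix.conjTranspose_eq_transpose_of_trivial] at h
  have hspec : Bᵀ * B = U * diagonal μ * Uᵀ := by
    have h := hG.spectral_theorem
    rwa [Unitary.conjStarAlgAut_apply, Matrix.star_eq_conjTranspose, Matrix.conjTranspose_eq_transpose_of_trivial,
      RCLike.ofReal_real_eq_id, Function.id_comp] at h
  set C : Matrix (Fin D) (Fin K) ℝ := B * U with hCdef
  have hCtC : Cᵀ * C = diagonal μ := by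
    rw [hCdef, transpose_mul]
    calc Uᵀ * Bᵀ * (B * U) = Uᵀ * (Bᵀ * B) * U := by
          rw [Matrix.mul_assoc, Matrix.mul_assoc, Matrix.mul_assoc]
      _ = (Uᵀ * U) * diagonal μ * (Uᵀ * U) := by
          rw [hspec]; simp only [Matrix.mul_assoc]
      _ = diagonal μ := by rw [hUU', Matrix.one_mul, Matrix.mul_one]
  have hCCt : C * Cᵀ = B * Bᵀ := by
    rw [hCdef, transpose_mul]
    calc B * U * (Uᵀ * Bᵀ) = B * (U * Uᵀ) * Bᵀ := by simp only [Matrix.mul_assoc]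
      _ = B * Bᵀ := by rw [hUU, Matrix.mul_one]
  have hcol : ∀ j, ∑ i, C i j ^ 2 = μ j := by
    intro j
    have h := congrFun (congrFun hCtC j) j
    simp only [mul_apply, transpose_apply, diagonal_apply_eq] at h
    rw [← h]
    exact Finset.sum_congr rfl fun i _ => (pow_two _)
  set t : Fin K → ℝ := fun j => ∑ i, e i * C i j ^ 2 with htdef
  set s : Fin K → ℝ := fun j => ∑ i, e i ^ 2 * C i j ^ 2 with hsdef
  set q : Fin D → ℝ := fun i => ∑ j, (if μ j = 0 then 0 else C i j ^ 2 / μ j) with hqdef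
  have hstep1 : ∑ i, e i * (B * Bᵀ) i i = ∑ j, t j := by
    rw [← hCCt]
    calc ∑ i, e i * (C * Cᵀ) i i = ∑ i, ∑ j, e i * C i j ^ 2 := by
          refine Finset.sum_congr rfl fun i _ => ?_
          rw [mul_apply, Finset.mul_sum]
          exact Finset.sum_congr rfl fun j _ => by rw [transpose_apply, pow_two]
      _ = ∑ j, t j := Finset.sum_comm
  have hstep2 : frobSq (B * Bᵀ) = ∑ j, μ j ^ 2 := by
    rw [← hCCt, frobSq_eq_trace]
    have h1 : (C * Cᵀ)ᵀ * (C * Cᵀ) = C * ((Cᵀ * C) * Cᵀ) := by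
      simp only [transpose_mul, transpose_transpose, Matrix.mul_assoc]
    rw [h1, Matrix.trace_mul_comm, hCtC, Matrix.mul_assoc, hCtC, diagonal_mul_diagonal,
      trace_diagonal]
    exact Finset.sum_congr rfl fun j _ => (pow_two _).symm
  have hμzero : ∀ j, μ j = 0 → ∀ i, C i j = 0 := by
    intro j hj i
    have h := hcol j
    rw [hj] at h
    have := (Finset.sum_eq_zero_iff_of_nonneg fun i _ => sq_nonneg (C i j)).mp h i
      (Finset.mem_univ i)
    exact pow_eq_zero_iff two_ne_zero |>.mp this
  have hperj : ∀ j, 2 * t j - μ j ^ 2 ≤ (if μ j = 0 then 0 else s j / μ j) := by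
    intro j
    by_cases hj : μ j = 0
    · rw [if_pos hj, hj]
      have ht0 : t j = 0 := Finset.sum_eq_zero fun i _ => by rw [hμzero j hj i]; ring
      simp [ht0]
    · rw [if_neg hj]
      have hjpos : 0 < μ j := (hμ0 j).lt_of_ne (Ne.symm hj)
      have hCS := Finset.sum_mul_sq_le_sq_mul_sq Finset.univ (fun i => e i * C i j)
        (fun i => C i j)
      have h1 : ∑ i, (e i * C i j) * C i j = t j :=
        Finset.sum_congr rfl fun i _ => by rw [pow_two]; ring
      have h2 : ∑ i, (e i * C i j) ^ 2 = s j :=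
        Finset.sum_congr rfl fun i _ => by ring
      simp only [h1] at hCS
      rw [h2, hcol j] at hCS
      rw [le_div_iff₀ hjpos]
      nlinarith [sq_nonneg (t j - μ j ^ 2), hjpos, hCS]
  have hstep4 : ∑ j, (if μ j = 0 then 0 else s j / μ j) = ∑ i, e i ^ 2 * q i := by
    have h : ∀ j, (if μ j = 0 then 0 else s j / μ j)
        = ∑ i, e i ^ 2 * (if μ j = 0 then 0 else C i j ^ 2 / μ j) := by
      intro j
      by_cases hj : μ j = 0
      · simp [hj]
      · rw [if_neg hj, hsdef]
        simp only
        rw [Finset.sum_div]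
        exact Finset.sum_congr rfl fun i _ => by rw [if_neg hj]; ring
    rw [Finset.sum_congr rfl fun j _ => h j, Finset.sum_comm]
    exact Finset.sum_congr rfl fun i _ => (Finset.mul_sum _ _ _).symm
  have hq0 : ∀ i, 0 ≤ q i := by
    intro i
    refine Finset.sum_nonneg fun j _ => ?_
    by_cases hj : μ j = 0
    · simp [hj]
    · rw [if_neg hj]
      exact div_nonneg (sq_nonneg _) (hμ0 j)
  have hqs : ∑ i, q i ≤ K := by
    rw [hqdef]
    simp only
    rw [Finset.sum_comm]
    have h : ∀ j : Fin K, (∑ i, if μ j = 0 then 0 else C i j ^ 2 / μ j) ≤ 1 := by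
      intro j
      by_cases hj : μ j = 0
      · simp [hj]
      · rw [Finset.sum_congr rfl fun i _ => if_neg hj, ← Finset.sum_div, hcol j,
          div_self hj]
    calc ∑ j : Fin K, (∑ i, if μ j = 0 then 0 else C i j ^ 2 / μ j)
        ≤ ∑ _j : Fin K, (1 : ℝ) := Finset.sum_le_sum fun j _ => h j
      _ = K := by simp
  have hq1 : ∀ i, q i ≤ 1 := by
    intro i
    set ν : Fin K → ℝ := fun j => if μ j = 0 then 0 else (μ j)⁻¹ with hνdef
    set Q : Matrix (Fin D) (Fin D) ℝ := C * diagonal ν * Cᵀ with hQdef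
    have hQsymm : Qᵀ = Q := by
      rw [hQdef]
      simp only [transpose_mul, transpose_transpose, diagonal_transpose, Matrix.mul_assoc]
    have hdiagν : diagonal ν * diagonal μ * diagonal ν = diagonal ν := by
      rw [diagonal_mul_diagonal, diagonal_mul_diagonal]
      refine congrArg Matrix.diagonal (funext fun j => ?_)
      by_cases hj : μ j = 0
      · simp [hνdef, hj]
      · simp only [hνdef, if_neg hj]
        field_simp
    have hQQ : Q * Q = Q := by
      have h1 : Q * Q = C * (diagonal ν * (Cᵀ * C) * diagonal ν) * Cᵀ := by
        rw [hQdef]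
        simp only [Matrix.mul_assoc]
      rw [h1, hCtC, hdiagν, hQdef]
    have hQii : Q i i = q i := by
      rw [hQdef, hqdef]
      simp only
      rw [Matrix.mul_apply]
      refine Finset.sum_congr rfl fun j _ => ?_
      rw [Matrix.mul_diagonal, transpose_apply]
      by_cases hj : μ j = 0 <;> simp [hνdef, hj]
      rw [pow_two, div_eq_mul_inv]
      ring
    have hx : Q i i ^ 2 ≤ Q i i := by
      have h1 : Q i i = ∑ m, Q i m ^ 2 := by
        conv_lhs => rw [← hQQ]
        rw [Matrix.mul_apply]
        refine Finset.sum_congr rfl fun m _ => ?_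
        have : Q m i = Q i m := by
          conv_lhs => rw [← hQsymm]
          rfl
        rw [this, pow_two]
      calc Q i i ^ 2 ≤ ∑ m, Q i m ^ 2 :=
            Finset.single_le_sum (f := fun m => Q i m ^ 2)
              (fun m _ => sq_nonneg _) (Finset.mem_univ i)
        _ = Q i i := h1.symm
    rw [← hQii]
    nlinarith [hx]
  have he2 : Antitone (fun i : Fin D => e i ^ 2) := fun i j hij =>
    pow_le_pow_left₀ (he0 j) (he hij) 2
  calc 2 * (∑ i, e i * (B * Bᵀ) i i) - frobSq (B * Bᵀ)
      = ∑ j, (2 * t j - μ j ^ 2) := by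
        rw [hstep1, hstep2, Finset.sum_sub_distrib, Finset.mul_sum]
    _ ≤ ∑ j, (if μ j = 0 then 0 else s j / μ j) := Finset.sum_le_sum fun j _ => hperj j
    _ = ∑ i, e i ^ 2 * q i := hstep4
    _ ≤ ∑ i : Fin D, (if (i : ℕ) < K then e i ^ 2 else 0) :=
        abel_bound hK _ q he2 (fun i => sq_nonneg _) hq0 hq1 hqs
lemma frobSq_conj (V A : Matrix (Fin D) (Fin D) ℝ) (hV : Vᵀ * V = 1) :
    frobSq (V * A * Vᵀ) = frobSq A := by
  rw [frobSq_eq_trace, frobSq_eq_trace]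
  have h1 : (V * A * Vᵀ)ᵀ * (V * A * Vᵀ) = V * (Aᵀ * A) * Vᵀ := by
    simp only [transpose_mul, transpose_transpose, Matrix.mul_assoc]
    rw [show Vᵀ * (V * (A * Vᵀ)) = A * Vᵀ from by
      rw [← Matrix.mul_assoc, hV, Matrix.one_mul]]
  rw [h1, Matrix.mul_assoc, Matrix.trace_mul_comm, Matrix.mul_assoc (Aᵀ * A) Vᵀ V, hV,
    Matrix.mul_one]


lemma frobSq_sub {m n : Type*} [Fintype m] [Fintype n] (X Y : Matrix m n ℝ) :
    frobSq (X - Y) = frobSq X - 2 * (∑ i, ∑ j, X i j * Y i j) + frobSq Y := by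
  have h : ∀ i j, (X i j - Y i j) ^ 2
      = (X i j ^ 2 + Y i j ^ 2) - 2 * (X i j * Y i j) := by intros; ring
  simp only [frobSq, Matrix.sub_apply, h, Finset.sum_sub_distrib, Finset.sum_add_distrib,
    ← Finset.mul_sum]
  ring


lemma inner_diag (d : Fin D → ℝ) (P : Matrix (Fin D) (Fin D) ℝ) :
    (∑ i, ∑ j, diagonal d i j * P i j) = ∑ i, d i * P i i := by
  refine Finset.sum_congr rfl fun i _ => ?_
  rw [Finset.sum_eq_single i]
  · simp
  · intro j _ hj; simp [diagonal_apply_ne d (Ne.symm hj)]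
  · simp


lemma frobSq_diagonal (d : Fin D → ℝ) :
    frobSq (diagonal d) = ∑ i, (d i) ^ 2 := by
  refine Finset.sum_congr rfl fun i _ => ?_
  rw [Finset.sum_eq_single i]
  · simp
  · intro j _ hj; simp [diagonal_apply_ne d (Ne.symm hj)]
  · simp


lemma sum_castLE (hK : K ≤ D) (F : Fin D → ℝ) (hF : ∀ i : Fin D, K ≤ (i : ℕ) → F i = 0) :
    ∑ i : Fin D, F i = ∑ k : Fin K, F (Fin.castLE hK k) := by
  have h2 : ∑ k : Fin K, F (Fin.castLE hK k)
      = ∑ i ∈ Finset.univ.map (Fin.castLEEmb hK), F i := by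
    rw [Finset.sum_map]; simp [Fin.castLEEmb]
  rw [h2]
  refine (Finset.sum_subset (Finset.subset_univ _) fun i _ hi => hF i ?_).symm
  by_contra h
  push_neg at h
  exact hi (Finset.mem_map.mpr ⟨⟨i, h⟩, Finset.mem_univ _, by ext; rfl⟩)


lemma conj_diag_apply {n m : Type*} [Fintype m] [DecidableEq m] (W : Matrix n m ℝ)
    (w : m → ℝ) (a b : n) :
    (W * diagonal w * Wᵀ) a b = ∑ k, W a k * w k * W b k := by
  rw [mul_apply]
  exact Finset.sum_congr rfl fun k _ => by rw [Matrix.mul_diagonal, transpose_apply]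

lemma submatrix_diag_conj (hK : K ≤ D) (V : Matrix (Fin D) (Fin D) ℝ) (g : Fin D → ℝ) :
    V.submatrix id (Fin.castLE hK) * diagonal (fun k : Fin K => g (Fin.castLE hK k))
      * (V.submatrix id (Fin.castLE hK))ᵀ
    = V * diagonal (fun i : Fin D => if (i : ℕ) < K then g i else 0) * Vᵀ := by
  ext a b
  rw [conj_diag_apply, conj_diag_apply]
  rw [sum_castLE hK (fun i => V a i * (if (i : ℕ) < K then g i else 0) * V b i)
    (fun i hi => by
      show (V a i * if (i : ℕ) < K then g i else 0) * V b i = 0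
      rw [if_neg (by omega), mul_zero, zero_mul])]
  refine Finset.sum_congr rfl fun k _ => ?_
  rw [Matrix.submatrix_apply, Matrix.submatrix_apply, if_pos (by simp [Fin.coe_castLE])]
  rfl

lemma key (hK : K ≤ D) (d : Fin D → ℝ) (hd : Antitone d)
    (hdpos : ∀ i : Fin D, (i : ℕ) < K → 0 < d i)
    (B : Matrix (Fin D) (Fin K) ℝ) :
    (∑ k : Fin D, if K ≤ (k : ℕ) then (d k) ^ 2 else 0)
      ≤ frobSq (diagonal d - B * Bᵀ) := by
  set e : Fin D → ℝ := fun i => max (d i) 0 with hedef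
  have he : Antitone e := fun i j hij => max_le_max (hd hij) le_rfl
  have he0 : ∀ i, 0 ≤ e i := fun i => le_max_right _ _
  have hcore := core hK e he he0 B
  have hexp := frobSq_sub (diagonal d) (B * Bᵀ)
  rw [inner_diag, frobSq_diagonal] at hexp
  have hP : ∀ i, 0 ≤ (B * Bᵀ) i i := by
    intro i
    rw [mul_apply]
    exact Finset.sum_nonneg fun j _ => by rw [transpose_apply]; exact mul_self_nonneg _
  have hde : ∑ i, d i * (B * Bᵀ) i i ≤ ∑ i, e i * (B * Bᵀ) i i :=
    Finset.sum_le_sum fun i _ => mul_le_mul_of_nonneg_right (le_max_left _ _) (hP i)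
  have hsplit : ∑ i, (d i) ^ 2
      = (∑ i : Fin D, if (i : ℕ) < K then (e i) ^ 2 else 0)
        + ∑ i : Fin D, if K ≤ (i : ℕ) then (d i) ^ 2 else 0 := by
    rw [← Finset.sum_add_distrib]
    refine Finset.sum_congr rfl fun i _ => ?_
    by_cases hi : (i : ℕ) < K
    · rw [if_pos hi, if_neg (by omega), hedef]
      simp only
      rw [max_eq_left (hdpos i hi).le, add_zero]
    · rw [if_neg hi, if_pos (by omega), zero_add]
  linarith

theorem stmt_2 {D K : ℕ} (hK : K ≤ D) (M : Matrix (Fin D) (Fin D) ℝ) (hM : M.IsSymm)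
    (V : Matrix (Fin D) (Fin D) ℝ) (hV : Vᵀ * V = 1)
    (eig : Fin D → ℝ) (heig : Antitone eig)
    (hdecomp : M = V * Matrix.diagonal eig * Vᵀ)
    (hpos : ∀ k : Fin D, (k : ℕ) < K → 0 < eig k) :
    (∀ W : Matrix (Fin D) (Fin K) ℝ,
      (∑ k : Fin D, if K ≤ (k : ℕ) then (eig k) ^ 2 else 0) ≤ frobSq (M - W * Wᵀ)) ∧
    frobSq (M -
        (V.submatrix id (Fin.castLE hK) *
          Matrix.diagonal fun k : Fin K => Real.sqrt (eig (Fin.castLE hK k))) *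
        (V.submatrix id (Fin.castLE hK) *
          Matrix.diagonal fun k : Fin K => Real.sqrt (eig (Fin.castLE hK k)))ᵀ) =
      (∑ k : Fin D, if K ≤ (k : ℕ) then (eig k) ^ 2 else 0) := by
  have hVV : V * Vᵀ = 1 := mul_eq_one_comm.mp hV
  constructor
  · intro W
    have h2 : V * ((Vᵀ * W) * (Vᵀ * W)ᵀ) * Vᵀ = W * Wᵀ := by
      rw [transpose_mul, transpose_transpose]
      simp only [Matrix.mul_assoc]
      rw [hVV, Matrix.mul_one, ← Matrix.mul_assoc, hVV, Matrix.one_mul]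
    have hfact : M - W * Wᵀ = V * (diagonal eig - (Vᵀ * W) * (Vᵀ * W)ᵀ) * Vᵀ := by
      rw [Matrix.mul_sub, Matrix.sub_mul, ← hdecomp, h2]
    rw [hfact, frobSq_conj _ _ hV]
    exact key hK eig heig hpos _
  · have hsq : ∀ k : Fin K,
        Real.sqrt (eig (Fin.castLE hK k)) * Real.sqrt (eig (Fin.castLE hK k))
          = eig (Fin.castLE hK k) := fun k =>
      Real.mul_self_sqrt (hpos _ (by simp [Fin.coe_castLE])).le
    have h1 : ∀ (A : Matrix (Fin D) (Fin K) ℝ) (f : Fin K → ℝ),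
        (A * diagonal f) * (A * diagonal f)ᵀ = A * diagonal (fun k => f k * f k) * Aᵀ := by
      intro A f
      rw [transpose_mul, diagonal_transpose, ← diagonal_mul_diagonal]
      simp only [Matrix.mul_assoc]
    have hW0 : (V.submatrix id (Fin.castLE hK) *
          Matrix.diagonal fun k : Fin K => Real.sqrt (eig (Fin.castLE hK k))) *
        (V.submatrix id (Fin.castLE hK) *
          Matrix.diagonal fun k : Fin K => Real.sqrt (eig (Fin.castLE hK k)))ᵀ
        = V * diagonal (fun i : Fin D => if (i : ℕ) < K then eig i else 0) * Vᵀ := by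
      rw [h1]
      rw [show (fun k : Fin K => Real.sqrt (eig (Fin.castLE hK k))
          * Real.sqrt (eig (Fin.castLE hK k)))
          = fun k : Fin K => eig (Fin.castLE hK k) from funext hsq]
      exact submatrix_diag_conj hK V eig
    have hd : diagonal eig - diagonal (fun i : Fin D => if (i : ℕ) < K then eig i else 0)
        = diagonal (fun i : Fin D => if K ≤ (i : ℕ) then eig i else 0) := by
      rw [diagonal_sub]
      refine congrArg _ (funext fun i => ?_)
      by_cases hi : (i : ℕ) < K
      · rw [if_pos hi, if_neg (by omega), sub_self]
      · rw [if_neg hi, if_pos (by omega), sub_zero]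
    have hfin : M - (V.submatrix id (Fin.castLE hK) *
          Matrix.diagonal fun k : Fin K => Real.sqrt (eig (Fin.castLE hK k))) *
        (V.submatrix id (Fin.castLE hK) *
          Matrix.diagonal fun k : Fin K => Real.sqrt (eig (Fin.castLE hK k)))ᵀ
        = V * diagonal (fun i : Fin D => if K ≤ (i : ℕ) then eig i else 0) * Vᵀ := by
      rw [hW0, hdecomp, ← Matrix.sub_mul, ← Matrix.mul_sub, hd]
    rw [hfin, frobSq_conj _ _ hV, frobSq_diagonal]
    refine Finset.sum_congr rfl fun i _ => ?_
    by_cases hi : K ≤ (i : ℕ)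
    · rw [if_pos hi, if_pos hi]
    · rw [if_neg hi, if_neg hi]
      exact zero_pow two_ne_zero
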